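/- (1) For every partition of ℚ into two sets C and D, either C with the order inherited from ℚ is order-isomorphic to ℚ, or there is a subset of D that with the inherited order is order-isomorphic to ℚ. (2) This is not true with both alternatives strengthened to isomorphism: there exists a partition (C, D) of ℚ such that neither C nor D with the inherited order is order-isomorphic to ℚ. -/
import Mathlib

lemma aux_dense_iso (C : Set ℚ) (h : ∀ a b : ℚ, a < b → ∃ c ∈ C, a < c ∧ c < b) :
    Nonempty (ℚ ≃o C) := by
  have hne : C.Nonempty := by
    obtain ⟨c, hc, -⟩ := h 0 1 (by norm_num); exact ⟨c, hc⟩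
  haveI : Nonempty C := hne.to_subtype
  haveI : DenselyOrdered C := ⟨fun x y hxy => by
    obtain ⟨c, hc, h1, h2⟩ := h x y hxy
    exact ⟨⟨c, hc⟩, h1, h2⟩⟩
  haveI : NoMinOrder C := ⟨fun x => by
    obtain ⟨c, hc, h1, h2⟩ := h ((x : ℚ) - 1) x (by linarith)
    exact ⟨⟨c, hc⟩, h2⟩⟩
  haveI : NoMaxOrder C := ⟨fun x => by
    obtain ⟨c, hc, h1, h2⟩ := h x ((x : ℚ) + 1) (by linarith)
    exact ⟨⟨c, hc⟩, h1⟩⟩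
  exact Order.iso_of_countable_dense ℚ C

lemma aux_Ioo_iso (a b : ℚ) (hab : a < b) : Nonempty (ℚ ≃o (Set.Ioo a b : Set ℚ)) := by
  haveI : Nonempty (Set.Ioo a b : Set ℚ) := (Set.nonempty_Ioo.2 hab).to_subtype
  haveI : DenselyOrdered (Set.Ioo a b : Set ℚ) := ⟨fun x y hxy => by
    have hxy' : (x : ℚ) < y := hxy
    obtain ⟨c, h1, h2⟩ := exists_between hxy'
    exact ⟨⟨c, x.2.1.trans h1, h2.trans y.2.2⟩, h1, h2⟩⟩
  haveI : NoMinOrder (Set.Ioo a b : Set ℚ) := ⟨fun x => by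
    obtain ⟨c, h1, h2⟩ := exists_between x.2.1
    exact ⟨⟨c, h1, h2.trans x.2.2⟩, h2⟩⟩
  haveI : NoMaxOrder (Set.Ioo a b : Set ℚ) := ⟨fun x => by
    obtain ⟨c, h1, h2⟩ := exists_between x.2.2
    exact ⟨⟨c, x.2.1.trans h1, h2⟩, h1⟩⟩
  exact Order.iso_of_countable_dense ℚ _

theorem statement4 :
    (∀ C : Set ℚ, Nonempty (ℚ ≃o C) ∨ ∃ S : Set ℚ, S ⊆ Cᶜ ∧ Nonempty (ℚ ≃o S)) ∧
    (∃ C : Set ℚ, ¬ Nonempty (ℚ ≃o C) ∧ ¬ Nonempty (ℚ ≃o ↥(Cᶜ))) := by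
  constructor
  · intro C
    by_cases h : ∀ a b : ℚ, a < b → ∃ c ∈ C, a < c ∧ c < b
    · exact Or.inl (aux_dense_iso C h)
    · push_neg at h
      obtain ⟨a, b, hab, hC⟩ := h
      refine Or.inr ⟨Set.Ioo a b, ?_, aux_Ioo_iso a b hab⟩
      intro x hx hxC
      exact absurd (hC x hxC hx.1) (not_le.2 hx.2)
  · refine ⟨Set.Ioo 0 1 ∪ {5}, ?_, ?_⟩
    · rintro ⟨f⟩
      have h5 : (5 : ℚ) ∈ Set.Ioo (0:ℚ) 1 ∪ {5} := Or.inr rfl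
      set x := f.symm ⟨5, h5⟩ with hx
      have hlt : x < x + 1 := by linarith
      have := f.lt_iff_lt.mpr hlt
      rw [show f x = ⟨5, h5⟩ from by simp [hx]] at this
      have hle : (f (x + 1) : ℚ) ≤ 5 := by
        rcases (f (x + 1)).2 with h | h
        · linarith [h.2]
        · exact le_of_eq h
      have : (5 : ℚ) < (f (x + 1) : ℚ) := this
      linarith
    · rintro ⟨f⟩
      have h0 : (0 : ℚ) ∈ (Set.Ioo (0:ℚ) 1 ∪ {5})ᶜ := by
        simp [Set.mem_Ioo]
      have h1 : (1 : ℚ) ∈ (Set.Ioo (0:ℚ) 1 ∪ {5})ᶜ := by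
        simp [Set.mem_Ioo]
      set u := f.symm ⟨0, h0⟩
      set v := f.symm ⟨1, h1⟩
      have huv : u < v :=
        f.symm.lt_iff_lt.mpr (Subtype.mk_lt_mk.mpr (by norm_num))
      obtain ⟨m, hm1, hm2⟩ := exists_between huv
      have hfm := (f m).2
      have l1 : (0 : ℚ) < (f m : ℚ) := by
        have h := f.lt_iff_lt.mpr hm1
        rwa [show f u = ⟨0, h0⟩ from f.apply_symm_apply _] at h
      have l2 : ((f m : ℚ)) < 1 := by
        have h := f.lt_iff_lt.mpr hm2
        rwa [show f v = ⟨1, h1⟩ from f.apply_symm_apply _] at h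
      exact hfm (Or.inl ⟨l1, l2⟩)
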